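/- Let k be a positive integer, ε₁,…,ε_k ≥ 0 and c₁,…,c_k ≥ 0 real, δ₁,…,δ_k, δ_g ∈ [0,1), ε_g ≥ 0, and let c = Σ_{i=1}^k c_i. If (1/∏_{i=1}^k (1+exp(ε_i))) · Σ_{S ⊆ {1,…,k}} max(exp(Σ_{i∈S} ε_i) − exp(ε_g)·exp(Σ_{i∉S} ε_i), 0) ≤ 1 − (1−exp(−c/2)·δ_g)/∏_{i=1}^k (1−δ_i), then (1/∏_{i=1}^k (1+exp(ε_i+c_i))) · Σ_{S ⊆ {1,…,k}} max(exp(Σ_{i∈S} (ε_i+c_i)) − exp(ε_g+c)·exp(Σ_{i∉S} (ε_i+c_i)), 0) ≤ 1 − (1−δ_g)/∏_{i=1}^k (1−δ_i). -/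

import Mathlib

open Finset

/-- The analytic content of Lemma 5.3 of Murtagh–Vadhan: if `(ε_g, δ_g·exp(−c/2))`
satisfies the optimal composition inequality for the parameters `(ε_i, δ_i)`, then
`(ε_g + c, δ_g)` satisfies it for the rounded-up parameters `(ε_i + c_i, δ_i)`,
where `c = Σ c_i`. -/
theorem optComp_rounding (k : ℕ) (hk : 0 < k) (ε c δ : Fin k → ℝ)
    (hε : ∀ i, 0 ≤ ε i) (hc : ∀ i, 0 ≤ c i) (hδ : ∀ i, 0 ≤ δ i ∧ δ i < 1)
    (εg δg : ℝ) (hεg : 0 ≤ εg) (hδg : 0 ≤ δg ∧ δg < 1)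
    (hineq : (1 / ∏ i, (1 + Real.exp (ε i))) *
        ∑ S : Finset (Fin k),
          max (Real.exp (∑ i ∈ S, ε i) - Real.exp εg * Real.exp (∑ i ∈ Sᶜ, ε i)) 0
      ≤ 1 - (1 - Real.exp (-(∑ i, c i) / 2) * δg) / ∏ i, (1 - δ i)) :
    (1 / ∏ i, (1 + Real.exp (ε i + c i))) *
        ∑ S : Finset (Fin k),
          max (Real.exp (∑ i ∈ S, (ε i + c i))
            - Real.exp (εg + ∑ i, c i) * Real.exp (∑ i ∈ Sᶜ, (ε i + c i))) 0
      ≤ 1 - (1 - δg) / ∏ i, (1 - δ i) := by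
  set C := ∑ i, c i with hCdef
  have hC0 : 0 ≤ C := Finset.sum_nonneg fun i _ => hc i
  set P := ∏ i, (1 - δ i) with hPdef
  have hP0 : 0 < P := Finset.prod_pos fun i _ => by linarith [(hδ i).2]
  have hP1 : P ≤ 1 := Finset.prod_le_one (fun i _ => by linarith [(hδ i).2])
    (fun i _ => by linarith [(hδ i).1])
  have hE0 : 0 < ∏ i, (1 + Real.exp (ε i)) := Finset.prod_pos fun i _ => by positivity
  have hE'0 : 0 < ∏ i, (1 + Real.exp (ε i + c i)) := Finset.prod_pos fun i _ => by positivity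
  -- denominator bound
  have hEprod : Real.exp (C / 2) * ∏ i, (1 + Real.exp (ε i))
      ≤ ∏ i, (1 + Real.exp (ε i + c i)) := by
    have h1 : ∏ i, (Real.exp (c i / 2) * (1 + Real.exp (ε i)))
        ≤ ∏ i, (1 + Real.exp (ε i + c i)) := by
      apply Finset.prod_le_prod
      · intro i _; positivity
      · intro i _
        have ha : 1 ≤ Real.exp (c i / 2) := Real.one_le_exp (by linarith [hc i])
        have hb : 1 ≤ Real.exp (ε i) := Real.one_le_exp (hε i)
        have h2 : Real.exp (ε i + c i)
            = Real.exp (ε i) * (Real.exp (c i / 2) * Real.exp (c i / 2)) := by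
          rw [← Real.exp_add, ← Real.exp_add]; ring_nf
        rw [h2]
        nlinarith [mul_nonneg (sub_nonneg.mpr ha)
          (sub_nonneg.mpr (one_le_mul_of_one_le_of_one_le ha hb))]
    calc Real.exp (C / 2) * ∏ i, (1 + Real.exp (ε i))
        = ∏ i, (Real.exp (c i / 2) * (1 + Real.exp (ε i))) := by
          rw [Finset.prod_mul_distrib, ← Real.exp_sum, ← Finset.sum_div]
      _ ≤ _ := h1
  -- termwise bound
  have hterm : ∀ S : Finset (Fin k),
      max (Real.exp (∑ i ∈ S, (ε i + c i))
        - Real.exp (εg + C) * Real.exp (∑ i ∈ Sᶜ, (ε i + c i))) 0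
      ≤ Real.exp C *
        max (Real.exp (∑ i ∈ S, ε i) - Real.exp εg * Real.exp (∑ i ∈ Sᶜ, ε i)) 0 := by
    intro S
    have hsplit : ∑ i ∈ S, c i + ∑ i ∈ Sᶜ, c i = C := Finset.sum_add_sum_compl S c
    have hcS : ∑ i ∈ S, c i ≤ C := by
      have : 0 ≤ ∑ i ∈ Sᶜ, c i := Finset.sum_nonneg fun i _ => hc i
      linarith
    have hcSc : 1 ≤ Real.exp (∑ i ∈ Sᶜ, c i) :=
      Real.one_le_exp (Finset.sum_nonneg fun i _ => hc i)
    apply max_le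
    · have key : Real.exp (∑ i ∈ S, (ε i + c i))
          - Real.exp (εg + C) * Real.exp (∑ i ∈ Sᶜ, (ε i + c i))
          ≤ Real.exp C *
            (Real.exp (∑ i ∈ S, ε i) - Real.exp εg * Real.exp (∑ i ∈ Sᶜ, ε i)) := by
        rw [Finset.sum_add_distrib, Finset.sum_add_distrib, Real.exp_add, Real.exp_add,
          Real.exp_add]
        have h1 : Real.exp (∑ i ∈ S, c i) ≤ Real.exp C := Real.exp_le_exp.mpr hcS
        have h2 : Real.exp (∑ i ∈ S, ε i) * Real.exp (∑ i ∈ S, c i)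
            ≤ Real.exp (∑ i ∈ S, ε i) * Real.exp C :=
          mul_le_mul_of_nonneg_left h1 (Real.exp_pos _).le
        have h3 : Real.exp εg * Real.exp C * (Real.exp (∑ i ∈ Sᶜ, ε i) * 1)
            ≤ Real.exp εg * Real.exp C * (Real.exp (∑ i ∈ Sᶜ, ε i)
              * Real.exp (∑ i ∈ Sᶜ, c i)) := by
          apply mul_le_mul_of_nonneg_left _ (by positivity)
          exact mul_le_mul_of_nonneg_left hcSc (Real.exp_pos _).le
        nlinarith [h2, h3]
      calc _ ≤ Real.exp C *
            (Real.exp (∑ i ∈ S, ε i) - Real.exp εg * Real.exp (∑ i ∈ Sᶜ, ε i)) := key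
        _ ≤ _ := mul_le_mul_of_nonneg_left (le_max_left _ _) (Real.exp_pos _).le
    · positivity
  have hS0 : 0 ≤ ∑ S : Finset (Fin k),
      max (Real.exp (∑ i ∈ S, ε i) - Real.exp εg * Real.exp (∑ i ∈ Sᶜ, ε i)) 0 :=
    Finset.sum_nonneg fun S _ => le_max_right _ _
  have hS'0 : 0 ≤ ∑ S : Finset (Fin k),
      max (Real.exp (∑ i ∈ S, (ε i + c i))
        - Real.exp (εg + C) * Real.exp (∑ i ∈ Sᶜ, (ε i + c i))) 0 :=
    Finset.sum_nonneg fun S _ => le_max_right _ _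
  have hsum : ∑ S : Finset (Fin k),
      max (Real.exp (∑ i ∈ S, (ε i + c i))
        - Real.exp (εg + C) * Real.exp (∑ i ∈ Sᶜ, (ε i + c i))) 0
      ≤ Real.exp C * ∑ S : Finset (Fin k),
        max (Real.exp (∑ i ∈ S, ε i) - Real.exp εg * Real.exp (∑ i ∈ Sᶜ, ε i)) 0 := by
    rw [Finset.mul_sum]
    exact Finset.sum_le_sum fun S _ => hterm S
  have hinv : 1 / ∏ i, (1 + Real.exp (ε i + c i))
      ≤ Real.exp (-(C / 2)) * (1 / ∏ i, (1 + Real.exp (ε i))) := by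
    have heq : Real.exp (-(C / 2)) * (1 / ∏ i, (1 + Real.exp (ε i)))
        = 1 / (Real.exp (C / 2) * ∏ i, (1 + Real.exp (ε i))) := by
      rw [Real.exp_neg]
      field_simp
    rw [heq]
    exact one_div_le_one_div_of_le (by positivity) hEprod
  -- combine
  have hmain : (1 / ∏ i, (1 + Real.exp (ε i + c i))) *
        ∑ S : Finset (Fin k),
          max (Real.exp (∑ i ∈ S, (ε i + c i))
            - Real.exp (εg + C) * Real.exp (∑ i ∈ Sᶜ, (ε i + c i))) 0
      ≤ Real.exp (C / 2) * ((1 / ∏ i, (1 + Real.exp (ε i))) *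
        ∑ S : Finset (Fin k),
          max (Real.exp (∑ i ∈ S, ε i) - Real.exp εg * Real.exp (∑ i ∈ Sᶜ, ε i)) 0) := by
    calc (1 / ∏ i, (1 + Real.exp (ε i + c i))) *
          ∑ S : Finset (Fin k),
            max (Real.exp (∑ i ∈ S, (ε i + c i))
              - Real.exp (εg + C) * Real.exp (∑ i ∈ Sᶜ, (ε i + c i))) 0
        ≤ (Real.exp (-(C / 2)) * (1 / ∏ i, (1 + Real.exp (ε i)))) *
          (Real.exp C * ∑ S : Finset (Fin k),
            max (Real.exp (∑ i ∈ S, ε i) - Real.exp εg * Real.exp (∑ i ∈ Sᶜ, ε i)) 0) := by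
          apply mul_le_mul hinv hsum hS'0 (by positivity)
      _ = (Real.exp (-(C / 2)) * Real.exp C) * ((1 / ∏ i, (1 + Real.exp (ε i))) *
          ∑ S : Finset (Fin k),
            max (Real.exp (∑ i ∈ S, ε i) - Real.exp εg * Real.exp (∑ i ∈ Sᶜ, ε i)) 0) := by
          ring
      _ = _ := by
          rw [← Real.exp_add]
          have : -(C / 2) + C = C / 2 := by ring
          rw [this]
  -- final arithmetic
  have hfin : Real.exp (C / 2) * (1 - (1 - Real.exp (-C / 2) * δg) / P)
      ≤ 1 - (1 - δg) / P := by
    have hab : Real.exp (C / 2) * Real.exp (-C / 2) = 1 := by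
      rw [← Real.exp_add]; ring_nf; exact Real.exp_zero
    have ha : 1 ≤ Real.exp (C / 2) := Real.one_le_exp (by linarith)
    have hexp : Real.exp (-C / 2) = (Real.exp (C / 2))⁻¹ := by
      rw [← Real.exp_neg]; ring_nf
    have ha0 : Real.exp (C / 2) ≠ 0 := (Real.exp_pos _).ne'
    have hiden : 1 - (1 - δg) / P - Real.exp (C / 2) * (1 - (1 - Real.exp (-C / 2) * δg) / P)
        = (Real.exp (C / 2) - 1) * (1 / P - 1) := by
      rw [hexp]
      field_simp
      ring
    have hP1' : 1 ≤ 1 / P := by rw [le_div_iff₀ hP0]; linarith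
    nlinarith [mul_nonneg (sub_nonneg.mpr ha) (sub_nonneg.mpr hP1')]
  have hmono : Real.exp (C / 2) * ((1 / ∏ i, (1 + Real.exp (ε i))) *
        ∑ S : Finset (Fin k),
          max (Real.exp (∑ i ∈ S, ε i) - Real.exp εg * Real.exp (∑ i ∈ Sᶜ, ε i)) 0)
      ≤ Real.exp (C / 2) * (1 - (1 - Real.exp (-C / 2) * δg) / P) :=
    mul_le_mul_of_nonneg_left hineq (Real.exp_pos _).le
  linarith [hmain, hmono, hfin]
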